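/- Let p > 3 be a prime. The number of distinct sets among the Ω_k^p, k ∈ ℤ/pℤ \ {0,-1}, that have cardinality 6 is (p-7)/6 if p ≡ 1 (mod 3), and (p-5)/6 if p ≡ -1 (mod 3). (With p = 2g+1, this is the count of isolated singular points of the moduli space M_g for g ≥ 4.) -/

import Mathlib

/-- `Ω_k^p := {k, -1-k, k⁻¹, -1-k⁻¹, -(k+1)⁻¹, (k+1)⁻¹ - 1} ⊆ ℤ/pℤ`. -/
def Omega (p : ℕ) (k : ZMod p) : Finset (ZMod p) :=
  {k, -1 - k, k⁻¹, -1 - k⁻¹, -(k + 1)⁻¹, (k + 1)⁻¹ - 1}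

/-- The index set `ℤ/pℤ \ {0, -1}` as a finset. -/
def indexSet (p : ℕ) [NeZero p] : Finset (ZMod p) :=
  Finset.univ.filter (fun k => k ≠ 0 ∧ k ≠ -1)

namespace StmtSix

variable {p : ℕ} [Fact p.Prime]

lemma two_ne (hp3 : 3 < p) : (2 : ZMod p) ≠ 0 := by
  intro h
  have h2 : ((2 : ℕ) : ZMod p) = 0 := by exact_mod_cast h
  have := (ZMod.natCast_eq_zero_iff 2 p).mp h2
  have := Nat.le_of_dvd (by norm_num) this
  omega

lemma three_ne (hp3 : 3 < p) : (3 : ZMod p) ≠ 0 := by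
  intro h
  have h2 : ((3 : ℕ) : ZMod p) = 0 := by exact_mod_cast h
  have := (ZMod.natCast_eq_zero_iff 3 p).mp h2
  have := Nat.le_of_dvd (by norm_num) this
  omega

/-- The predicate cutting out the small orbits. -/
def Q (p : ℕ) (k : ZMod p) : Prop :=
  k = 1 ∨ k = -2 ∨ 2 * k + 1 = 0 ∨ k ^ 2 + k + 1 = 0

instance : DecidablePred (Q p) := fun k => by unfold Q; infer_instance

lemma Q_ne_zero (hp3 : 3 < p) {k : ZMod p} (hQ : Q p k) : k ≠ 0 := by
  intro h
  rcases hQ with h1 | h1 | h1 | h1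
  · exact one_ne_zero (show (1 : ZMod p) = 0 by rw [← h1, h])
  · exact two_ne hp3 (by linear_combination h1 - h)
  · exact one_ne_zero (show (1 : ZMod p) = 0 by linear_combination h1 - 2 * h)
  · exact one_ne_zero (show (1 : ZMod p) = 0 by linear_combination h1 - (k + 1) * h)

lemma Q_ne_negone (hp3 : 3 < p) {k : ZMod p} (hQ : Q p k) : k ≠ -1 := by
  intro h
  rcases hQ with h1 | h1 | h1 | h1
  · exact two_ne hp3 (by linear_combination h - h1)
  · exact one_ne_zero (show (1 : ZMod p) = 0 by linear_combination h1 - h)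
  · exact one_ne_zero (show (1 : ZMod p) = 0 by linear_combination -h1 + 2 * h)
  · exact one_ne_zero (show (1 : ZMod p) = 0 by linear_combination h1 - k * h)

lemma card_le_five (a b c d e : ZMod p) : ({a, b, c, d, e} : Finset (ZMod p)).card ≤ 5 := by
  refine le_trans (Finset.card_insert_le _ _) ?_
  refine le_trans (Nat.add_le_add_right (Finset.card_insert_le _ _) 1) ?_
  refine le_trans (Nat.add_le_add_right (Nat.add_le_add_right (Finset.card_insert_le _ _) 1) 1) ?_
  refine le_trans (Nat.add_le_add_right (Nat.add_le_add_right
    (Nat.add_le_add_right (Finset.card_insert_le _ _) 1) 1) 1) ?_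
  simp

lemma card_omega_ne_six (hp3 : 3 < p) {k : ZMod p} (hk0 : k ≠ 0) (hk1 : k ≠ -1)
    (hQ : Q p k) : (Omega p k).card ≠ 6 := by
  have hk1' : k + 1 ≠ 0 := fun h => hk1 (by linear_combination h)
  have h2 : (2 : ZMod p) ≠ 0 := two_ne hp3
  rcases hQ with h1 | h1 | h1 | h1
  · -- k = 1 : k⁻¹ = k
    have hdup : k⁻¹ = k := by rw [h1, inv_one]
    have hsub : Omega p k ⊆ {k, -1 - k, -1 - k⁻¹, -(k + 1)⁻¹, (k + 1)⁻¹ - 1} := by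
      intro x hx
      simp only [Omega, Finset.mem_insert, Finset.mem_singleton] at hx ⊢
      rcases hx with rfl | rfl | rfl | rfl | rfl | rfl <;> simp [hdup]
    have := (Finset.card_le_card hsub).trans (card_le_five _ _ _ _ _)
    omega
  · -- k = -2 : -1 - k⁻¹ = k⁻¹
    have hdup : -1 - k⁻¹ = k⁻¹ := by
      have hkk : k * k⁻¹ = 1 := mul_inv_cancel₀ hk0
      have : k⁻¹ * 2 = -1 := by
        calc k⁻¹ * 2 = k⁻¹ * -(-2) := by ring
        _ = k⁻¹ * -k := by rw [← h1]
        _ = -(k * k⁻¹) := by ring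
        _ = -1 := by rw [hkk]
      linear_combination -this
    have hsub : Omega p k ⊆ {k, -1 - k, k⁻¹, -(k + 1)⁻¹, (k + 1)⁻¹ - 1} := by
      intro x hx
      simp only [Omega, Finset.mem_insert, Finset.mem_singleton] at hx ⊢
      rcases hx with rfl | rfl | rfl | rfl | rfl | rfl <;> simp [hdup]
    have := (Finset.card_le_card hsub).trans (card_le_five _ _ _ _ _)
    omega
  · -- 2k+1 = 0 : -1 - k = k
    have hdup : -1 - k = k := by linear_combination -h1
    have hsub : Omega p k ⊆ {k, k⁻¹, -1 - k⁻¹, -(k + 1)⁻¹, (k + 1)⁻¹ - 1} := by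
      intro x hx
      simp only [Omega, Finset.mem_insert, Finset.mem_singleton] at hx ⊢
      rcases hx with rfl | rfl | rfl | rfl | rfl | rfl <;> simp [hdup]
    have := (Finset.card_le_card hsub).trans (card_le_five _ _ _ _ _)
    omega
  · -- k²+k+1 = 0 : k⁻¹ = -1-k
    have hdup : k⁻¹ = -1 - k :=
      inv_eq_of_mul_eq_one_right (by linear_combination -h1)
    have hsub : Omega p k ⊆ {k, -1 - k, -1 - k⁻¹, -(k + 1)⁻¹, (k + 1)⁻¹ - 1} := by
      intro x hx
      simp only [Omega, Finset.mem_insert, Finset.mem_singleton] at hx ⊢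
      rcases hx with rfl | rfl | rfl | rfl | rfl | rfl <;> simp [hdup]
    have := (Finset.card_le_card hsub).trans (card_le_five _ _ _ _ _)
    omega

lemma card_omega_eq_six (hp3 : 3 < p) {k : ZMod p} (hk0 : k ≠ 0) (hk1 : k ≠ -1)
    (hQ : ¬ Q p k) : (Omega p k).card = 6 := by
  unfold Q at hQ
  push_neg at hQ
  obtain ⟨n1, n2, n3, n4⟩ := hQ
  have hk1' : k + 1 ≠ 0 := fun h => hk1 (by linear_combination h)
  have factr : ∀ h : (k - 1) * (k + 1) = 0, False := by
    intro h
    rcases mul_eq_zero.mp h with h | h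
    · exact n1 (by linear_combination h)
    · exact hk1' h
  have fact2 : ∀ h : k * (k + 2) = 0, False := by
    intro h
    rcases mul_eq_zero.mp h with h | h
    · exact hk0 h
    · exact n2 (by linear_combination h)
  have d1 : k ≠ -1 - k := fun h => n3 (by linear_combination h)
  have d2 : k ≠ k⁻¹ := by
    intro h; field_simp at h; exact factr (by linear_combination h)
  have d3 : k ≠ -1 - k⁻¹ := by
    intro h; field_simp at h; exact n4 (by linear_combination h)
  have d4 : k ≠ -(k + 1)⁻¹ := by
    intro h; field_simp at h; exact n4 (by linear_combination h)
  have d5 : k ≠ (k + 1)⁻¹ - 1 := by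
    intro h; field_simp at h; exact fact2 (by linear_combination h)
  have d6 : -1 - k ≠ k⁻¹ := by
    intro h; field_simp at h; exact n4 (by linear_combination -h)
  have d7 : -1 - k ≠ -1 - k⁻¹ := by
    intro h; field_simp at h; exact factr (by linear_combination -h)
  have d8 : -1 - k ≠ -(k + 1)⁻¹ := by
    intro h; field_simp at h; exact fact2 (by linear_combination -h)
  have d9 : -1 - k ≠ (k + 1)⁻¹ - 1 := by
    intro h; field_simp at h; exact n4 (by linear_combination -h)
  have d10 : k⁻¹ ≠ -1 - k⁻¹ := by
    intro h; field_simp at h; exact n2 (by linear_combination h)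
  have d11 : k⁻¹ ≠ -(k + 1)⁻¹ := by
    intro h; field_simp at h; exact n3 (by linear_combination h)
  have d12 : k⁻¹ ≠ (k + 1)⁻¹ - 1 := by
    intro h; field_simp at h; exact n4 (by linear_combination h)
  have d13 : -1 - k⁻¹ ≠ -(k + 1)⁻¹ := by
    intro h; field_simp at h; exact n4 (by linear_combination -h)
  have d14 : -1 - k⁻¹ ≠ (k + 1)⁻¹ - 1 := by
    intro h; field_simp at h; exact n3 (by linear_combination -h)
  have d15 : -(k + 1)⁻¹ ≠ (k + 1)⁻¹ - 1 := by
    intro h; field_simp at h; exact factr (by linear_combination (k + 1) * h)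
  show (({k, -1 - k, k⁻¹, -1 - k⁻¹, -(k + 1)⁻¹, (k + 1)⁻¹ - 1}) : Finset (ZMod p)).card = 6
  rw [Finset.card_insert_of_notMem (by
    simp only [Finset.mem_insert, Finset.mem_singleton, not_or]
    exact ⟨d1, d2, d3, d4, d5⟩)]
  rw [Finset.card_insert_of_notMem (by
    simp only [Finset.mem_insert, Finset.mem_singleton, not_or]
    exact ⟨d6, d7, d8, d9⟩)]
  rw [Finset.card_insert_of_notMem (by
    simp only [Finset.mem_insert, Finset.mem_singleton, not_or]
    exact ⟨d10, d11, d12⟩)]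
  rw [Finset.card_insert_of_notMem (by
    simp only [Finset.mem_insert, Finset.mem_singleton, not_or]
    exact ⟨d13, d14⟩)]
  rw [Finset.card_insert_of_notMem (by
    simp only [Finset.mem_singleton]
    exact d15)]
  simp

lemma card_omega_iff (hp3 : 3 < p) {k : ZMod p} (hk0 : k ≠ 0) (hk1 : k ≠ -1) :
    (Omega p k).card = 6 ↔ ¬ Q p k := by
  constructor
  · intro h hQ; exact card_omega_ne_six hp3 hk0 hk1 hQ h
  · exact card_omega_eq_six hp3 hk0 hk1

lemma mem_omega_self (k : ZMod p) : k ∈ Omega p k := by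
  simp [Omega]

lemma omega_neg (k : ZMod p) : Omega p (-1 - k) = Omega p k := by
  have h1 : -1 - (-1 - k) = k := by ring
  have h2 : (-1 - k)⁻¹ = -(k + 1)⁻¹ := by rw [show (-1 - k) = -(k + 1) by ring, inv_neg]
  have h3 : -1 - -(k + 1)⁻¹ = (k + 1)⁻¹ - 1 := by ring
  have h4 : -((-1 - k) + 1)⁻¹ = k⁻¹ := by rw [show (-1 - k) + 1 = -k by ring, inv_neg]; ring
  have h5 : ((-1 - k) + 1)⁻¹ - 1 = -1 - k⁻¹ := by
    rw [show (-1 - k) + 1 = -k by ring, inv_neg]; ring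
  simp only [Omega, h1, h2, h3, h4, h5]
  ext x
  simp only [Finset.mem_insert, Finset.mem_singleton]
  tauto

lemma omega_inv {k : ZMod p} (hk0 : k ≠ 0) (hk1' : k + 1 ≠ 0) :
    Omega p k⁻¹ = Omega p k := by
  have e1 : -(k⁻¹ + 1)⁻¹ = (k + 1)⁻¹ - 1 := by
    rw [show k⁻¹ + 1 = (1 + k) * k⁻¹ by field_simp, mul_inv, inv_inv]
    rw [show (1 + k)⁻¹ * k = (k + 1)⁻¹ * k by ring_nf]
    field_simp
    ring
  have e2 : (k⁻¹ + 1)⁻¹ - 1 = -(k + 1)⁻¹ := by linear_combination -e1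
  simp only [Omega, inv_inv, e1, e2]
  ext x
  simp only [Finset.mem_insert, Finset.mem_singleton]
  tauto

lemma omega_eq_of_mem (hp3 : 3 < p) {k j : ZMod p} (hk0 : k ≠ 0) (hk1 : k ≠ -1)
    (hj : j ∈ Omega p k) : Omega p j = Omega p k := by
  have hk1' : k + 1 ≠ 0 := fun h => hk1 (by linear_combination h)
  have hn0 : -1 - k ≠ 0 := fun h => hk1 (by linear_combination -h)
  have hn1 : (-1 - k) + 1 ≠ 0 := fun h => hk0 (by linear_combination -h)
  simp only [Omega, Finset.mem_insert, Finset.mem_singleton] at hj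
  rcases hj with rfl | rfl | rfl | rfl | rfl | rfl
  · rfl
  · exact omega_neg k
  · exact omega_inv hk0 hk1'
  · calc Omega p (-1 - k⁻¹) = Omega p k⁻¹ := omega_neg k⁻¹
      _ = Omega p k := omega_inv hk0 hk1'
  · rw [show -(k + 1)⁻¹ = (-1 - k)⁻¹ by rw [show (-1 - k) = -(k + 1) by ring, inv_neg]]
    calc Omega p (-1 - k)⁻¹ = Omega p (-1 - k) := omega_inv hn0 hn1
      _ = Omega p k := omega_neg k
  · rw [show (k + 1)⁻¹ - 1 = -1 - (-1 - k)⁻¹ by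
      rw [show (-1 - k) = -(k + 1) by ring, inv_neg]; ring]
    calc Omega p (-1 - (-1 - k)⁻¹) = Omega p (-1 - k)⁻¹ := omega_neg _
      _ = Omega p (-1 - k) := omega_inv hn0 hn1
      _ = Omega p k := omega_neg k

lemma omega_mem_index (hp3 : 3 < p) {k j : ZMod p} (hk0 : k ≠ 0) (hk1 : k ≠ -1)
    (hj : j ∈ Omega p k) : j ≠ 0 ∧ j ≠ -1 := by
  have hk1' : k + 1 ≠ 0 := fun h => hk1 (by linear_combination h)
  have hinv0 : k⁻¹ ≠ 0 := inv_ne_zero hk0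
  have hinv1 : k⁻¹ ≠ -1 := by
    intro h
    apply hk1
    rw [← inv_inv k, h, inv_neg, inv_one]
  have hs0 : (k + 1)⁻¹ ≠ 0 := inv_ne_zero hk1'
  have hs1 : (k + 1)⁻¹ ≠ 1 := by
    intro h
    apply hk0
    have : k + 1 = 1 := by rw [← inv_inv (k + 1), h, inv_one]
    linear_combination this
  simp only [Omega, Finset.mem_insert, Finset.mem_singleton] at hj
  rcases hj with rfl | rfl | rfl | rfl | rfl | rfl
  · exact ⟨hk0, hk1⟩
  · exact ⟨fun h => hk1 (by linear_combination -h), fun h => hk0 (by linear_combination -h)⟩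
  · exact ⟨hinv0, hinv1⟩
  · exact ⟨fun h => hinv1 (by linear_combination -h), fun h => hinv0 (by linear_combination -h)⟩
  · constructor
    · intro h; exact hs0 (by linear_combination -h)
    · intro h; exact hs1 (by linear_combination -h)
  · constructor
    · intro h; exact hs1 (by linear_combination h)
    · intro h; exact hs0 (by linear_combination h)

lemma six_mul_card (hp3 : 3 < p) :
    6 * (((indexSet p).image (Omega p)).filter (fun t => t.card = 6)).card
      = ((indexSet p).filter (fun k => (Omega p k).card = 6)).card := by
  set T := (indexSet p).filter (fun k => (Omega p k).card = 6) with hT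
  have himg : ((indexSet p).image (Omega p)).filter (fun t => t.card = 6)
      = T.image (Omega p) := by
    ext t
    simp only [Finset.mem_filter, Finset.mem_image, hT]
    constructor
    · rintro ⟨⟨k, hk, rfl⟩, hcard⟩
      exact ⟨k, ⟨hk, hcard⟩, rfl⟩
    · rintro ⟨k, ⟨hk1, hk2⟩, rfl⟩
      exact ⟨⟨k, hk1, rfl⟩, hk2⟩
  rw [himg]
  rw [Finset.card_eq_sum_card_fiberwise
    (f := Omega p) (t := T.image (Omega p)) (fun x hx => Finset.mem_image_of_mem _ hx)]
  rw [Finset.sum_congr rfl (g := fun _ => 6) ?_, Finset.sum_const, smul_eq_mul, mul_comm]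
  intro b hb
  obtain ⟨k0, hk0T, rfl⟩ := Finset.mem_image.mp hb
  obtain ⟨hk0idx, h6⟩ := Finset.mem_filter.mp hk0T
  obtain ⟨-, hk00, hk01⟩ := Finset.mem_filter.mp hk0idx
  have hfib : T.filter (fun a => Omega p a = Omega p k0) = Omega p k0 := by
    ext j
    simp only [Finset.mem_filter, hT]
    constructor
    · rintro ⟨-, heq⟩
      rw [← heq]
      exact mem_omega_self j
    · intro hjmem
      have hji := omega_mem_index hp3 hk00 hk01 hjmem
      have heq := omega_eq_of_mem hp3 hk00 hk01 hjmem
      refine ⟨⟨?_, ?_⟩, heq⟩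
      · simp only [indexSet, Finset.mem_filter, Finset.mem_univ, true_and]
        exact hji
      · rw [heq]; exact h6
  rw [hfib]
  exact h6

lemma indexSet_card (hp3 : 3 < p) : (indexSet p).card + 2 = p := by
  have h01 : (0 : ZMod p) ≠ -1 := by
    intro h
    exact one_ne_zero (show (1 : ZMod p) = 0 by linear_combination h)
  have : indexSet p = Finset.univ \ {0, -1} := by
    ext k
    simp only [indexSet, Finset.mem_filter, Finset.mem_univ, true_and, Finset.mem_sdiff,
      Finset.mem_insert, Finset.mem_singleton]
    tauto
  rw [this, Finset.card_sdiff_of_subset (Finset.subset_univ _)]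
  rw [show ({0, -1} : Finset (ZMod p)).card = 2 by
    rw [Finset.card_insert_of_notMem (by simpa using h01), Finset.card_singleton]]
  rw [Finset.card_univ, ZMod.card]
  omega

lemma filter_neg_eq (hp3 : 3 < p) :
    (indexSet p).filter (fun k => ¬ (Omega p k).card = 6) = Finset.univ.filter (Q p) := by
  ext k
  simp only [Finset.mem_filter, Finset.mem_univ, true_and, indexSet]
  constructor
  · rintro ⟨⟨hk0, hk1⟩, hne⟩
    by_contra hQ
    exact hne (card_omega_eq_six hp3 hk0 hk1 hQ)
  · intro hQ
    have hk0 := Q_ne_zero hp3 hQ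
    have hk1 := Q_ne_negone hp3 hQ
    refine ⟨⟨hk0, hk1⟩, ?_⟩
    exact card_omega_ne_six hp3 hk0 hk1 hQ

section Qcount

lemma base_ne12 (hp3 : 3 < p) : (1 : ZMod p) ≠ -2 :=
  fun h => three_ne hp3 (by linear_combination h)

lemma base_ne13 (hp3 : 3 < p) : (1 : ZMod p) ≠ -2⁻¹ := by
  intro h
  have hinv : (2 : ZMod p) * 2⁻¹ = 1 := mul_inv_cancel₀ (two_ne hp3)
  exact three_ne hp3 (by linear_combination 2 * h - hinv)

lemma base_ne23 (hp3 : 3 < p) : (-2 : ZMod p) ≠ -2⁻¹ := by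
  intro h
  have hinv : (2 : ZMod p) * 2⁻¹ = 1 := mul_inv_cancel₀ (two_ne hp3)
  exact three_ne hp3 (by linear_combination -2 * h + hinv)

lemma negtwoinv_Q (hp3 : 3 < p) : Q p (-2⁻¹) := by
  have hinv : (2 : ZMod p) * 2⁻¹ = 1 := mul_inv_cancel₀ (two_ne hp3)
  right; right; left
  linear_combination -hinv

lemma twok_eq (hp3 : 3 < p) {k : ZMod p} (h : 2 * k + 1 = 0) : k = -2⁻¹ := by
  have hinv : (2 : ZMod p) * 2⁻¹ = 1 := mul_inv_cancel₀ (two_ne hp3)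
  have h2 : (2 : ZMod p) ≠ 0 := two_ne hp3
  field_simp
  linear_combination h

lemma no_root_two (hp3 : 3 < p) (hmod : p % 3 = 2) {k : ZMod p} (hk : k ^ 2 + k + 1 = 0) :
    False := by
  have hk0 : k ≠ 0 := fun h => one_ne_zero (show (1 : ZMod p) = 0 by
    linear_combination hk - (k + 1) * h)
  have hcube : k * k ^ 2 = 1 := by linear_combination (k - 1) * hk
  let u : (ZMod p)ˣ := Units.mkOfMulEqOne k (k ^ 2) hcube
  have hu : (u : ZMod p) = k := rfl
  have hu3 : u ^ 3 = 1 := by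
    ext
    push_cast [hu]
    linear_combination (k - 1) * hk
  have hune : u ≠ 1 := by
    intro h
    have : k = 1 := by rw [← hu, h]; rfl
    exact three_ne hp3 (by linear_combination hk - (k + 2) * this)
  have hord : orderOf u = 3 := by
    have hdvd := orderOf_dvd_of_pow_eq_one hu3
    rcases (Nat.prime_three).eq_one_or_self_of_dvd _ hdvd with h | h
    · exact absurd (orderOf_eq_one_iff.mp h) hune
    · exact h
  have hdvd : 3 ∣ Fintype.card (ZMod p)ˣ := hord ▸ orderOf_dvd_card
  rw [ZMod.card_units] at hdvd
  omega

lemma Qcard_two (hp3 : 3 < p) (hmod : p % 3 = 2) :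
    (Finset.univ.filter (Q p)).card = 3 := by
  have hset : Finset.univ.filter (Q p) = ({1, -2, -2⁻¹} : Finset (ZMod p)) := by
    ext k
    simp only [Finset.mem_filter, Finset.mem_univ, true_and, Finset.mem_insert,
      Finset.mem_singleton]
    constructor
    · rintro (h | h | h | h)
      · exact Or.inl h
      · exact Or.inr (Or.inl h)
      · exact Or.inr (Or.inr (twok_eq hp3 h))
      · exact absurd h (fun h => no_root_two hp3 hmod h)
    · rintro (rfl | rfl | rfl)
      · exact Or.inl rfl
      · exact Or.inr (Or.inl rfl)
      · exact negtwoinv_Q hp3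
  rw [hset]
  rw [Finset.card_insert_of_notMem (by
    simp only [Finset.mem_insert, Finset.mem_singleton, not_or]
    exact ⟨base_ne12 hp3, base_ne13 hp3⟩)]
  rw [Finset.card_insert_of_notMem (by simpa using base_ne23 hp3)]
  simp

lemma Qcard_one (hp3 : 3 < p) (hmod : p % 3 = 1) :
    (Finset.univ.filter (Q p)).card = 5 := by
  have hinv : (2 : ZMod p) * 2⁻¹ = 1 := mul_inv_cancel₀ (two_ne hp3)
  -- get a primitive cube root of unity
  haveI : Fact (Nat.Prime 3) := ⟨by norm_num⟩
  have hdvd : 3 ∣ Fintype.card (ZMod p)ˣ := by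
    rw [ZMod.card_units]; omega
  obtain ⟨u, hu⟩ := exists_prime_orderOf_dvd_card 3 hdvd
  set ω : ZMod p := (u : ZMod p) with hω
  have hω3 : ω ^ 3 = 1 := by
    have := pow_orderOf_eq_one u
    rw [hu] at this
    have := congrArg (Units.val) this
    push_cast at this
    exact this
  have hω1 : ω ≠ 1 := by
    intro h
    have : u = 1 := Units.ext h
    rw [this, orderOf_one] at hu
    omega
  have hroot : ω ^ 2 + ω + 1 = 0 := by
    rcases mul_eq_zero.mp (show (ω - 1) * (ω ^ 2 + ω + 1) = 0 by linear_combination hω3)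
      with h | h
    · exact absurd (by linear_combination h) hω1
    · exact h
  have ωn1 : ω ≠ 1 := hω1
  have ωn2 : ω ≠ -2 := fun h => three_ne hp3 (by linear_combination hroot - (ω - 1) * h)
  have ωhalf : 2 * ω + 1 ≠ 0 := fun h => three_ne hp3 (by
    linear_combination 4 * hroot - (2 * ω + 1) * h)
  have ωn3 : ω ≠ -2⁻¹ := fun h => ωhalf (by linear_combination 2 * h - hinv)
  have ωnb : ω ≠ -1 - ω := fun h => ωhalf (by linear_combination h)
  have bn1 : (-1 - ω) ≠ 1 := fun h => ωn2 (by linear_combination -h)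
  have bn2 : (-1 - ω) ≠ -2 := fun h => ωn1 (by linear_combination -h)
  have bn3 : (-1 - ω) ≠ -2⁻¹ := fun h => ωhalf (by linear_combination -2 * h + hinv)
  have hset : Finset.univ.filter (Q p) = ({1, -2, -2⁻¹, ω, -1 - ω} : Finset (ZMod p)) := by
    ext k
    simp only [Finset.mem_filter, Finset.mem_univ, true_and, Finset.mem_insert,
      Finset.mem_singleton]
    constructor
    · rintro (h | h | h | h)
      · exact Or.inl h
      · exact Or.inr (Or.inl h)
      · exact Or.inr (Or.inr (Or.inl (twok_eq hp3 h)))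
      · rcases mul_eq_zero.mp (show (k - ω) * (k + 1 + ω) = 0 by
          linear_combination h - hroot) with h' | h'
        · exact Or.inr (Or.inr (Or.inr (Or.inl (by linear_combination h'))))
        · exact Or.inr (Or.inr (Or.inr (Or.inr (by linear_combination h'))))
    · rintro (rfl | rfl | rfl | rfl | rfl)
      · exact Or.inl rfl
      · exact Or.inr (Or.inl rfl)
      · exact negtwoinv_Q hp3
      · exact Or.inr (Or.inr (Or.inr hroot))
      · exact Or.inr (Or.inr (Or.inr (by linear_combination hroot)))
  rw [hset]
  rw [Finset.card_insert_of_notMem (by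
    simp only [Finset.mem_insert, Finset.mem_singleton, not_or]
    exact ⟨base_ne12 hp3, base_ne13 hp3, Ne.symm ωn1, Ne.symm bn1⟩)]
  rw [Finset.card_insert_of_notMem (by
    simp only [Finset.mem_insert, Finset.mem_singleton, not_or]
    exact ⟨base_ne23 hp3, Ne.symm ωn2, Ne.symm bn2⟩)]
  rw [Finset.card_insert_of_notMem (by
    simp only [Finset.mem_insert, Finset.mem_singleton, not_or]
    exact ⟨Ne.symm ωn3, Ne.symm bn3⟩)]
  rw [Finset.card_insert_of_notMem (by simpa using ωnb)]
  simp

end Qcount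

end StmtSix

theorem stmt_6 (p : ℕ) [Fact p.Prime] (hp3 : 3 < p) :
    (p % 3 = 1 →
      (((indexSet p).image (Omega p)).filter (fun t => t.card = 6)).card = (p - 7) / 6) ∧
    (p % 3 = 2 →
      (((indexSet p).image (Omega p)).filter (fun t => t.card = 6)).card = (p - 5) / 6) := by
  have hmul := StmtSix.six_mul_card (p := p) hp3
  have hsplit := Finset.card_filter_add_card_filter_not
    (s := indexSet p) (fun k => (Omega p k).card = 6)
  rw [StmtSix.filter_neg_eq hp3] at hsplit
  have hidx := StmtSix.indexSet_card (p := p) hp3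
  constructor
  · intro hmod
    have hQ := StmtSix.Qcard_one (p := p) hp3 hmod
    omega
  · intro hmod
    have hQ := StmtSix.Qcard_two (p := p) hp3 hmod
    omega
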